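/- For all integers m, n with 1 ≤ m ≤ n: Σ over all functions η : Fin m → Finset(Fin n) such that η i ≠ ∅ for every i and η i ∩ η j = ∅ for all i ≠ j, of (−1)^{(Σ_i card(η i)) − m}, equals 1 + Σ_{k=1}^{m−1} (−1)^{n+k+1} · binom(m, k+1) · k^n. (Equivalently, χ̃(Hom(K_m,K_n)) = Σ_{k=1}^{m−1} (−1)^{n+k+1} binom(m,k+1) k^n.) -/

import Mathlib

open Classical

open Finset in
lemma keyA (m n : ℕ) (s : Finset (Fin m)) :
    ∑ η ∈ Finset.univ.filter (fun η : Fin m → Finset (Fin n) =>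
        (∀ i ∉ s, η i = ∅) ∧ ∀ i j, i ≠ j → η i ∩ η j = ∅),
      (-1 : ℤ) ^ (∑ i, (η i).card)
    = (1 - (s.card : ℤ)) ^ n := by
  classical
  have hrhs : (1 - (s.card : ℤ)) ^ n
      = ∑ g ∈ Fintype.piFinset (fun _ : Fin n => insert none (s.image some)),
          ∏ c, (if g c = none then (1:ℤ) else -1) := by
    rw [show (∑ g ∈ Fintype.piFinset (fun _ : Fin n => insert none (s.image some)),
          ∏ c, (if g c = none then (1:ℤ) else -1))
        = ∏ _c : Fin n, ∑ o ∈ insert none (s.image some), (if o = none then (1:ℤ) else -1)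
      from (Finset.prod_univ_sum (fun _ : Fin n => insert none (s.image some))
        (fun _ o => if o = none then (1:ℤ) else -1)).symm]
    have h1 : ∀ c : Fin n,
        (∑ o ∈ insert none (s.image some), (if o = none then (1:ℤ) else -1))
        = 1 - (s.card : ℤ) := by
      intro c
      rw [Finset.sum_insert (by simp)]
      have : ∀ o ∈ s.image some, (if o = none then (1:ℤ) else -1) = -1 := by
        intro o ho
        simp only [Finset.mem_image] at ho
        obtain ⟨i, _, rfl⟩ := ho
        simp
      rw [Finset.sum_congr rfl this]
      simp [Finset.card_image_of_injective _ (Option.some_injective _)]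
      ring
    rw [Finset.prod_congr rfl (fun c _ => h1 c), Finset.prod_const, Finset.card_univ,
      Fintype.card_fin]
  rw [hrhs]
  refine Finset.sum_bij'
    (fun η _ => fun c => if h : ∃ i, c ∈ η i then some h.choose else none)
    (fun g _ => fun i => univ.filter fun c => g c = some i)
    ?_ ?_ ?_ ?_ ?_
  · -- maps into piFinset
    intro η hη
    simp only [Finset.mem_filter] at hη
    rw [Fintype.mem_piFinset]
    intro c
    by_cases h : ∃ i, c ∈ η i
    · simp only [h, dif_pos]
      apply Finset.mem_insert_of_mem
      apply Finset.mem_image_of_mem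
      by_contra hc
      have := hη.2.1 _ hc
      have := h.choose_spec
      simp_all
    · simp [h]
  · -- maps into filter
    intro g hg
    rw [Fintype.mem_piFinset] at hg
    simp only [Finset.mem_filter, Finset.mem_univ, true_and]
    constructor
    · intro i hi
      ext c
      simp only [Finset.mem_filter, Finset.mem_univ, true_and, Finset.notMem_empty,
        iff_false]
      intro hc
      have := hg c
      rw [hc] at this
      simp only [Finset.mem_insert, Finset.mem_image] at this
      rcases this with h | ⟨j, hj, hji⟩
      · cases h
      · exact hi (by rwa [Option.some_inj] at hji ▸ hj)
    · intro i j hij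
      ext c
      simp only [Finset.mem_inter, Finset.mem_filter, Finset.mem_univ, true_and,
        Finset.notMem_empty, iff_false]
      rintro ⟨h1, h2⟩
      rw [h1] at h2
      exact hij (Option.some_inj.mp h2)
  · -- left inverse
    intro η hη
    simp only [Finset.mem_filter] at hη
    funext i
    ext c
    simp only [Finset.mem_filter, Finset.mem_univ, true_and]
    constructor
    · intro hc
      split at hc
      · rename_i h
        have hspec := h.choose_spec
        have : h.choose = i := Option.some_inj.mp hc
        rwa [this] at hspec
      · cases hc
    · intro hc
      have h : ∃ j, c ∈ η j := ⟨i, hc⟩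
      simp only [h, dif_pos]
      congr 1
      by_contra hne
      have := hη.2.2 h.choose i hne
      have : c ∈ η h.choose ∩ η i := Finset.mem_inter.mpr ⟨h.choose_spec, hc⟩
      simp_all
  · -- right inverse
    intro g hg
    funext c
    dsimp only
    by_cases h : ∃ i, c ∈ univ.filter fun c' => g c' = some i
    · rw [dif_pos h]
      exact ((Finset.mem_filter.mp h.choose_spec).2).symm
    · rw [dif_neg h]
      push_neg at h
      rcases ho : g c with _ | i
      · rfl
      · exact absurd (Finset.mem_filter.mpr ⟨Finset.mem_univ c, ho⟩) (h i)
  · -- weights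
    intro η hη
    simp only [Finset.mem_filter] at hη
    have hdisj : ∀ i ∈ (univ : Finset (Fin m)), ∀ j ∈ univ, i ≠ j →
        Disjoint (η i) (η j) := by
      intro i _ j _ hij
      rw [Finset.disjoint_iff_inter_eq_empty]
      exact hη.2.2 i j hij
    have hcard : ∑ i, (η i).card = (univ.filter fun c => ∃ i, c ∈ η i).card := by
      rw [← Finset.card_biUnion hdisj]
      congr 1
      ext c
      simp
    have : ∀ c : Fin n,
        (if (if h : ∃ i, c ∈ η i then some h.choose else none) = none then (1:ℤ) else -1)
        = (if ∃ i, c ∈ η i then (-1:ℤ) else 1) := by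
      intro c
      by_cases h : ∃ i, c ∈ η i <;> simp [h]
    rw [Finset.prod_congr rfl (fun c _ => this c), Finset.prod_ite, Finset.prod_const,
      Finset.prod_const, hcard]
    simp

lemma algTail (m n : ℕ) (hm : 1 ≤ m) (hmn : m ≤ n) :
    (-1:ℤ)^m * ∑ a ∈ Finset.range (m+1),
        (m.choose a : ℤ) * ((-1:ℤ)^a * (1 - ((m:ℤ) - a))^n)
    = 1 + ∑ k ∈ Finset.Ico 1 m,
        (-1 : ℤ) ^ (n + k + 1) * (m.choose (k + 1)) * (k : ℤ) ^ n := by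
  rw [← Finset.sum_range_reflect
    (fun a => (m.choose a : ℤ) * ((-1:ℤ)^a * (1 - ((m:ℤ) - a))^n)) (m+1)]
  have hrefl : ∀ b ∈ Finset.range (m+1),
      ((m.choose (m + 1 - 1 - b) : ℤ) *
        ((-1:ℤ)^(m + 1 - 1 - b) * (1 - ((m:ℤ) - (m + 1 - 1 - b : ℕ)))^n))
      = (m.choose b : ℤ) * ((-1:ℤ)^(m - b) * (1 - (b:ℤ))^n) := by
    intro b hb
    rw [Finset.mem_range] at hb
    have hbm : b ≤ m := by omega
    have h1 : m + 1 - 1 - b = m - b := by omega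
    rw [h1, Nat.choose_symm hbm]
    congr 2
    push_cast [Nat.cast_sub hbm]
    ring
  rw [Finset.sum_congr rfl hrefl, Finset.mul_sum]
  have hsign : ∀ b ∈ Finset.range (m+1),
      (-1:ℤ)^m * ((m.choose b : ℤ) * ((-1:ℤ)^(m - b) * (1 - (b:ℤ))^n))
      = (-1:ℤ)^b * (m.choose b : ℤ) * (1 - (b:ℤ))^n := by
    intro b hb
    rw [Finset.mem_range] at hb
    have hpw : (-1:ℤ)^m * (-1:ℤ)^(m-b) = (-1:ℤ)^b := by
      rw [← pow_add, show m + (m - b) = b + 2*(m-b) by omega, pow_add, pow_mul]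
      simp
    calc (-1:ℤ)^m * ((m.choose b : ℤ) * ((-1:ℤ)^(m - b) * (1 - (b:ℤ))^n))
        = ((-1:ℤ)^m * (-1:ℤ)^(m-b)) * (m.choose b : ℤ) * (1 - (b:ℤ))^n := by ring
      _ = (-1:ℤ)^b * (m.choose b : ℤ) * (1 - (b:ℤ))^n := by rw [hpw]
  rw [Finset.sum_congr rfl hsign]
  rw [Finset.sum_range_succ']
  simp only [pow_zero, Nat.choose_zero_right, Nat.cast_one, one_mul, Nat.cast_zero,
    sub_zero, one_pow, mul_one]
  conv_lhs => rw [add_comm]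
  congr 1
  have hn : n ≠ 0 := by omega
  rw [Finset.range_eq_Ico, Finset.sum_eq_sum_Ico_succ_bot hm]
  have h0 : (-1:ℤ) ^ (0+1) * ((m.choose (0+1) : ℕ) : ℤ) * (1 - ((0+1 : ℕ) : ℤ))^n = 0 := by
    norm_num [zero_pow hn]
  rw [h0, zero_add]
  refine Finset.sum_congr rfl fun k hk => ?_
  have h1 : (1 - ((k+1 : ℕ) : ℤ))^n = (-1:ℤ)^n * (k:ℤ)^n := by
    push_cast
    rw [show (1 - ((k:ℤ)+1)) = -(k:ℤ) by ring, neg_pow]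
  rw [h1, show (-1:ℤ)^(n+k+1) = (-1:ℤ)^n * (-1:ℤ)^(k+1) from pow_add (-1) n (k+1)]
  ring

/-- **Euler characteristic of `Hom(K_m,K_n)` (Corollary 6.3 / `crl:chi1`).**
For `1 ≤ m ≤ n`,
`χ̃(Hom(K_m,K_n)) = Σ_{k=1}^{m−1} (−1)^{n+k+1} binom(m,k+1) k^n`,
where the cells of `Hom(K_m,K_n)` are indexed by tuples of pairwise disjoint
nonempty subsets of the color set. -/
theorem cohomology_of_colorings_of_cycles_stmt2
    (m n : ℕ) (hm : 1 ≤ m) (hmn : m ≤ n) :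
    ∑ η ∈ Finset.univ.filter (fun η : Fin m → Finset (Fin n) =>
        (∀ i, η i ≠ ∅) ∧ ∀ i j, i ≠ j → η i ∩ η j = ∅),
      (-1 : ℤ) ^ ((∑ i, (η i).card) - m)
    = 1 + ∑ k ∈ Finset.Ico 1 m,
        (-1 : ℤ) ^ (n + k + 1) * (m.choose (k + 1)) * (k : ℤ) ^ n := by
  classical
  set Q : (Fin m → Finset (Fin n)) → Prop :=
    fun η => ∀ i j, i ≠ j → η i ∩ η j = ∅ with hQ
  -- Step 1: get rid of the natural subtraction in the exponent
  have hstep1 : ∀ η ∈ Finset.univ.filter (fun η : Fin m → Finset (Fin n) =>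
        (∀ i, η i ≠ ∅) ∧ Q η),
      (-1:ℤ) ^ ((∑ i, (η i).card) - m) = (-1)^m * (-1) ^ (∑ i, (η i).card) := by
    intro η hη
    simp only [Finset.mem_filter] at hη
    have hge : m ≤ ∑ i, (η i).card := by
      calc m = ∑ _i : Fin m, 1 := by simp
        _ ≤ _ := Finset.sum_le_sum (fun i _ => Finset.card_pos.mpr
            (Finset.nonempty_iff_ne_empty.mpr (hη.2.1 i)))
    calc (-1:ℤ) ^ ((∑ i, (η i).card) - m)
        = (-1:ℤ) ^ ((∑ i, (η i).card) - m) * (-1)^(m+m) := by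
          rw [Even.neg_one_pow ⟨m, rfl⟩, mul_one]
      _ = (-1:ℤ) ^ (((∑ i, (η i).card) - m) + (m+m)) := (pow_add _ _ _).symm
      _ = (-1:ℤ) ^ (m + ∑ i, (η i).card) := by congr 1; omega
      _ = (-1)^m * (-1) ^ (∑ i, (η i).card) := pow_add _ _ _
  rw [Finset.sum_congr rfl hstep1, ← Finset.mul_sum]
  -- Step 2: inclusion-exclusion on the "nonempty" condition
  have hsplit :
      ∑ η ∈ Finset.univ.filter (fun η : Fin m → Finset (Fin n) =>
        (∀ i, η i ≠ ∅) ∧ Q η), (-1:ℤ) ^ (∑ i, (η i).card)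
      = ∑ η ∈ Finset.univ.filter Q,
          (-1:ℤ) ^ (∑ i, (η i).card) *
            ∏ i, (1 - if η i = ∅ then (1:ℤ) else 0) := by
    rw [show (Finset.univ.filter (fun η : Fin m → Finset (Fin n) =>
          (∀ i, η i ≠ ∅) ∧ Q η))
        = (Finset.univ.filter Q).filter (fun η => ∀ i, η i ≠ ∅) by
      rw [Finset.filter_filter]
      exact Finset.filter_congr fun η _ => by tauto]
    rw [Finset.sum_filter]
    refine Finset.sum_congr rfl fun η _ => ?_
    by_cases hP : ∀ i, η i ≠ ∅
    · rw [if_pos hP, Finset.prod_eq_one (fun i _ => by simp [hP i]), mul_one]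
    · rw [if_neg hP]
      push_neg at hP
      obtain ⟨i, hi⟩ := hP
      rw [Finset.prod_eq_zero (Finset.mem_univ i) (by simp [hi]), mul_zero]
  rw [hsplit]
  -- expand the product over subsets
  have hexpand : ∀ η : Fin m → Finset (Fin n),
      (∏ i, (1 - if η i = ∅ then (1:ℤ) else 0))
      = ∑ t ∈ (Finset.univ : Finset (Fin m)).powerset,
          (-1:ℤ)^(t.card) * (if ∀ i ∈ t, η i = ∅ then (1:ℤ) else 0) := by
    intro η
    have : ∀ i ∈ (Finset.univ : Finset (Fin m)),
        (1 - if η i = ∅ then (1:ℤ) else 0)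
        = (-(if η i = ∅ then (1:ℤ) else 0)) + 1 := fun i _ => by ring
    rw [Finset.prod_congr rfl this, Finset.prod_add]
    refine Finset.sum_congr rfl fun t _ => ?_
    rw [Finset.prod_const_one, mul_one]
    have h2 : ∏ i ∈ t, (-(if η i = ∅ then (1:ℤ) else 0))
        = ((-1:ℤ)^t.card) * ∏ i ∈ t, (if η i = ∅ then (1:ℤ) else 0) := by
      rw [← Finset.prod_const, ← Finset.prod_mul_distrib]
      exact Finset.prod_congr rfl fun i _ => by ring
    rw [h2]
    congr 1
    by_cases h : ∀ i ∈ t, η i = ∅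
    · rw [if_pos h]
      exact Finset.prod_eq_one fun i hi => if_pos (h i hi)
    · rw [if_neg h]
      push_neg at h
      obtain ⟨i, hi, hne⟩ := h
      exact Finset.prod_eq_zero hi (if_neg (Finset.nonempty_iff_ne_empty.mp hne))
  simp only [hexpand]
  have hswap :
      ∑ η ∈ Finset.univ.filter Q, (-1:ℤ) ^ (∑ i, (η i).card) *
          ∑ t ∈ (Finset.univ : Finset (Fin m)).powerset,
            (-1:ℤ)^(t.card) * (if ∀ i ∈ t, η i = ∅ then (1:ℤ) else 0)
      = ∑ t ∈ (Finset.univ : Finset (Fin m)).powerset, (-1:ℤ)^(t.card) *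
          ∑ η ∈ Finset.univ.filter (fun η : Fin m → Finset (Fin n) =>
            (∀ i ∉ tᶜ, η i = ∅) ∧ Q η), (-1:ℤ) ^ (∑ i, (η i).card) := by
    simp_rw [Finset.mul_sum]
    rw [Finset.sum_comm]
    refine Finset.sum_congr rfl fun t _ => ?_
    have hset : (Finset.univ.filter (fun η : Fin m → Finset (Fin n) =>
          (∀ i ∉ tᶜ, η i = ∅) ∧ Q η))
        = (Finset.univ.filter Q).filter (fun η => ∀ i ∈ t, η i = ∅) := by
      rw [Finset.filter_filter]
      refine Finset.filter_congr fun η _ => ?_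
      simp only [Finset.mem_compl, not_not]
      tauto
    calc ∑ η ∈ Finset.univ.filter Q,
          ((-1:ℤ) ^ (∑ i, (η i).card)) * ((-1:ℤ)^(t.card) *
            (if ∀ i ∈ t, η i = ∅ then (1:ℤ) else 0))
        = ∑ η ∈ Finset.univ.filter Q,
            (-1:ℤ)^(t.card) *
              (if ∀ i ∈ t, η i = ∅ then (-1:ℤ) ^ (∑ i, (η i).card) else 0) := by
          refine Finset.sum_congr rfl fun η _ => ?_
          by_cases h : ∀ i ∈ t, η i = ∅
          · rw [if_pos h, if_pos h]; ring
          · rw [if_neg h, if_neg h]; ring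
      _ = (-1:ℤ)^(t.card) * ∑ η ∈ Finset.univ.filter Q,
            (if ∀ i ∈ t, η i = ∅ then (-1:ℤ) ^ (∑ i, (η i).card) else 0) := by
          rw [Finset.mul_sum]
      _ = (-1:ℤ)^(t.card) *
            ∑ η ∈ (Finset.univ.filter Q).filter (fun η => ∀ i ∈ t, η i = ∅),
              (-1:ℤ) ^ (∑ i, (η i).card) := by
          congr 1
          exact (Finset.sum_filter _ _).symm
      _ = (-1:ℤ)^(t.card) *
            ∑ η ∈ Finset.univ.filter (fun η : Fin m → Finset (Fin n) =>
              (∀ i ∉ tᶜ, η i = ∅) ∧ Q η), (-1:ℤ) ^ (∑ i, (η i).card) := by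
          rw [hset]
      _ = ∑ η ∈ Finset.univ.filter (fun η : Fin m → Finset (Fin n) =>
              (∀ i ∉ tᶜ, η i = ∅) ∧ Q η),
            (-1:ℤ)^(t.card) * (-1:ℤ) ^ (∑ i, (η i).card) :=
          Finset.mul_sum _ _ _
  rw [hswap]
  -- evaluate the inner sums via keyA
  have hinner : ∀ t ∈ (Finset.univ : Finset (Fin m)).powerset,
      (-1:ℤ)^(t.card) *
        ∑ η ∈ Finset.univ.filter (fun η : Fin m → Finset (Fin n) =>
          (∀ i ∉ tᶜ, η i = ∅) ∧ Q η), (-1:ℤ) ^ (∑ i, (η i).card)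
      = (-1:ℤ)^(t.card) * (1 - ((m:ℤ) - t.card))^n := by
    intro t _
    rw [keyA m n tᶜ]
    congr 2
    rw [Finset.card_compl]
    have ht : t.card ≤ Fintype.card (Fin m) := Finset.card_le_univ t
    push_cast [Nat.cast_sub ht]
    simp
  rw [Finset.sum_congr rfl hinner]
  -- sum over subsets by cardinality, then conclude by `algTail`
  have hps : (∑ t ∈ (Finset.univ : Finset (Fin m)).powerset,
        (-1:ℤ)^(t.card) * (1 - ((m:ℤ) - t.card))^n)
      = ∑ a ∈ Finset.range (m+1),
          (m.choose a : ℤ) * ((-1:ℤ)^a * (1 - ((m:ℤ) - a))^n) := by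
    have h := Finset.sum_powerset_apply_card
      (fun a : ℕ => (-1:ℤ)^a * (1 - ((m:ℤ) - a))^n)
      (x := (Finset.univ : Finset (Fin m)))
    simpa [Finset.card_univ, Fintype.card_fin, nsmul_eq_mul, mul_assoc] using h
  rw [hps]
  exact algTail m n hm hmn
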